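/- The standard bracketing of a Lyndon word is unique: for each Lyndon word u there is exactly one nonassociative word [u] with underlying associative word u that is a standard nonassociative word, i.e., belongs to the largest set SL of bracketed words containing the letters and closed under: (1) if [u] = [[v][w]] ∈ SL then [v],[w] ∈ SL and v > w are Lyndon; (2) if [u] = [[[v1][v2]][w]] ∈ SL then v2 ≤ w. -/

import Mathlib

/-- Lexicographic order where a proper prefix is greater than the word itself. -/
def plex {X : Type*} [LinearOrder X] (u v : List X) : Prop :=
  (∃ w a b x y, a < b ∧ u = w ++ a :: x ∧ v = w ++ b :: y) ∨ (v <+: u ∧ v ≠ u)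

/-- Lyndon (standard) words: `vw > wv` for every factorization into nonempty words. -/
def IsLyndon {X : Type*} [LinearOrder X] (u : List X) : Prop :=
  u ≠ [] ∧ ∀ v w : List X, v ≠ [] → w ≠ [] → u = v ++ w → plex (w ++ v) (v ++ w)

/-- Nonassociative words: binary-tree bracketings of words over `X`. -/
inductive NAW (X : Type*) : Type _
  | leaf : X → NAW X
  | node : NAW X → NAW X → NAW X

/-- The underlying associative word of a nonassociative word. -/
def NAW.flatten {X : Type*} : NAW X → List X
  | .leaf x => [x]
  | .node l r => l.flatten ++ r.flatten

/-- Standard nonassociative words: the largest set `SL` of bracketed words containing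
the letters, such that (1) if `[u] = [[v][w]] ∈ SL` then `[v], [w] ∈ SL` and `v > w` are
Lyndon; (2) if `[u] = [[[v₁][v₂]][w]] ∈ SL` then `v₂ ≤ w`.  Since nonassociative words
are finite trees, this largest set is described by the following recursion. -/
def IsSL {X : Type*} [LinearOrder X] : NAW X → Prop
  | .leaf _ => True
  | .node l r => IsSL l ∧ IsSL r ∧ IsLyndon l.flatten ∧ IsLyndon r.flatten ∧
      plex r.flatten l.flatten ∧
      (match l with
        | .leaf _ => True
        | .node _ l₂ => ¬ plex r.flatten l₂.flatten)

section Core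
variable {X : Type*} [LinearOrder X]

/-- letter-difference comparison: matches first disjunct of `plex`. -/
def LDiff (u v : List X) : Prop :=
  ∃ w a b x y, a < b ∧ u = w ++ a :: x ∧ v = w ++ b :: y

theorem plex_iff (u v : List X) : plex u v ↔ LDiff u v ∨ (v <+: u ∧ v ≠ u) := Iff.rfl

theorem ldiff_nil_left (v : List X) : ¬ LDiff [] v := by
  rintro ⟨c, a, b, x, y, hab, hu, hv⟩
  exact absurd hu (by simp)

theorem ldiff_nil_right (u : List X) : ¬ LDiff u [] := by
  rintro ⟨c, a, b, x, y, hab, hu, hv⟩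
  exact absurd hv (by simp)

theorem ldiff_cons {a b : X} {u v : List X} :
    LDiff (a :: u) (b :: v) ↔ a < b ∨ (a = b ∧ LDiff u v) := by
  constructor
  · rintro ⟨c, a', b', x, y, hab, hu, hv⟩
    cases c with
    | nil =>
      simp only [List.nil_append, List.cons.injEq] at hu hv
      exact Or.inl (hu.1 ▸ hv.1 ▸ hab)
    | cons c0 c' =>
      simp only [List.cons_append, List.cons.injEq] at hu hv
      exact Or.inr ⟨hu.1.trans hv.1.symm, ⟨c', a', b', x, y, hab, hu.2, hv.2⟩⟩
  · rintro (hab | ⟨rfl, c, a', b', x, y, hab, hu, hv⟩)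
    · exact ⟨[], a, b, u, v, hab, rfl, rfl⟩
    · exact ⟨a :: c, a', b', x, y, hab, by simp [hu], by simp [hv]⟩

theorem ldiff_append_left_iff (c u v : List X) :
    LDiff (c ++ u) (c ++ v) ↔ LDiff u v := by
  induction c with
  | nil => simp
  | cons a c ih => simpa [ldiff_cons] using ih

theorem ldiff_append {u v : List X} (h : LDiff u v) (p q : List X) :
    LDiff (u ++ p) (v ++ q) := by
  obtain ⟨c, a, b, x, y, hab, hu, hv⟩ := h
  exact ⟨c, a, b, x ++ p, y ++ q, hab, by simp [hu], by simp [hv]⟩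

theorem ldiff_irrefl' (u y : List X) : ¬ LDiff u (u ++ y) := by
  induction u with
  | nil => exact ldiff_nil_left y
  | cons a u ih =>
    rw [List.cons_append, ldiff_cons]
    rintro (h | ⟨-, h⟩)
    · exact lt_irrefl a h
    · exact ih h

theorem ldiff_irrefl (u : List X) : ¬ LDiff u u := by
  simpa using ldiff_irrefl' u []

theorem ldiff_asymm : ∀ {u v : List X}, LDiff u v → LDiff v u → False := by
  intro u
  induction u with
  | nil => intro v h; exact absurd h (ldiff_nil_left v)
  | cons a u ih =>
    intro v h1 h2
    cases v with
    | nil => exact ldiff_nil_left _ h2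
    | cons b v =>
      rw [ldiff_cons] at h1 h2
      rcases h1 with h1 | ⟨rfl, h1⟩
      · rcases h2 with h2 | ⟨rfl, h2⟩
        · exact absurd h1 (lt_asymm h2)
        · exact lt_irrefl _ h1
      · rcases h2 with h2 | ⟨-, h2⟩
        · exact lt_irrefl _ h2
        · exact ih h1 h2

theorem ldiff_trans : ∀ {u v w : List X}, LDiff u v → LDiff v w → LDiff u w := by
  intro u
  induction u with
  | nil => intro v w h; exact absurd h (ldiff_nil_left v)
  | cons a u ih =>
    intro v w h1 h2
    cases v with
    | nil => exact absurd h1 (ldiff_nil_right _)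
    | cons b v =>
      cases w with
      | nil => exact absurd h2 (ldiff_nil_right _)
      | cons c w =>
        rw [ldiff_cons] at h1 h2 ⊢
        rcases h1 with h1 | ⟨rfl, h1⟩
        · rcases h2 with h2 | ⟨rfl, h2⟩
          · exact Or.inl (h1.trans h2)
          · exact Or.inl h1
        · rcases h2 with h2 | ⟨rfl, h2⟩
          · exact Or.inl h2
          · exact Or.inr ⟨rfl, ih h1 h2⟩

theorem ldiff_stable : ∀ {x : List X} (s : List X) {z : List X},
    LDiff x (s ++ z) → s <+: x ∨ ∀ z', LDiff x (s ++ z') := by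
  intro x s
  induction s generalizing x with
  | nil => intro z h; exact Or.inl (List.nil_prefix)
  | cons a s ih =>
    intro z h
    cases x with
    | nil => exact absurd h (ldiff_nil_left _)
    | cons b x =>
      rw [List.cons_append, ldiff_cons] at h
      rcases h with h | ⟨rfl, h⟩
      · exact Or.inr fun z' => by rw [List.cons_append, ldiff_cons]; exact Or.inl h
      · rcases ih h with h' | h'
        · exact Or.inl (List.cons_prefix_cons.2 ⟨rfl, h'⟩)
        · exact Or.inr fun z' => by
            rw [List.cons_append, ldiff_cons]; exact Or.inr ⟨rfl, h' z'⟩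

theorem ldiff_eqlen : ∀ {u v p q : List X}, u.length = v.length →
    LDiff (u ++ p) (v ++ q) → LDiff u v ∨ (u = v ∧ LDiff p q) := by
  intro u
  induction u with
  | nil =>
    intro v p q hl h
    rw [List.length_nil] at hl
    obtain rfl : v = [] := List.length_eq_zero_iff.1 hl.symm
    exact Or.inr ⟨rfl, by simpa using h⟩
  | cons a u ih =>
    intro v p q hl h
    cases v with
    | nil => simp at hl
    | cons b v =>
      simp only [List.length_cons, Nat.succ_inj] at hl
      rw [List.cons_append, List.cons_append, ldiff_cons] at h
      rcases h with h | ⟨rfl, h⟩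
      · exact Or.inl (ldiff_cons.2 (Or.inl h))
      · rcases ih hl h with h' | ⟨rfl, h'⟩
        · exact Or.inl (ldiff_cons.2 (Or.inr ⟨rfl, h'⟩))
        · exact Or.inr ⟨rfl, h'⟩

theorem ldiff_prefix_cases : ∀ {s : List X} {v p q : List X}, s.length ≤ v.length →
    LDiff (s ++ p) (v ++ q) → LDiff s v ∨ s <+: v := by
  intro s
  induction s with
  | nil => intro v p q _ _; exact Or.inr List.nil_prefix
  | cons a s ih =>
    intro v p q hl h
    cases v with
    | nil => simp at hl
    | cons b v =>
      simp only [List.length_cons, Nat.succ_le_succ_iff] at hl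
      rw [List.cons_append, List.cons_append, ldiff_cons] at h
      rcases h with h | ⟨rfl, h⟩
      · exact Or.inl (ldiff_cons.2 (Or.inl h))
      · rcases ih hl h with h' | h'
        · exact Or.inl (ldiff_cons.2 (Or.inr ⟨rfl, h'⟩))
        · exact Or.inr (List.cons_prefix_cons.2 ⟨rfl, h'⟩)

end Core

section Plex
variable {X : Type*} [LinearOrder X]

theorem plex_nil_right {u : List X} (hu : u ≠ []) : plex u [] :=
  Or.inr ⟨List.nil_prefix, Ne.symm hu⟩

theorem not_plex_nil_left (v : List X) : ¬ plex [] v := by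
  rintro (h | ⟨h, hne⟩)
  · exact ldiff_nil_left v h
  · exact hne (List.prefix_nil.1 h)

theorem plex_irrefl (u : List X) : ¬ plex u u := by
  rintro (h | ⟨-, hne⟩)
  · exact ldiff_irrefl u h
  · exact hne rfl

theorem plex_asymm {u v : List X} (h1 : plex u v) (h2 : plex v u) : False := by
  rcases h1 with h1 | ⟨h1, hne1⟩
  · rcases h2 with h2 | ⟨h2, hne2⟩
    · exact ldiff_asymm h1 h2
    · obtain ⟨t, rfl⟩ := h2
      exact ldiff_irrefl' u t h1
  · rcases h2 with h2 | ⟨h2, hne2⟩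
    · obtain ⟨t, rfl⟩ := h1
      exact ldiff_irrefl' v t h2
    · exact hne1 (h2.eq_of_length (le_antisymm h2.length_le h1.length_le)).symm

theorem plex_trans {x y z : List X} (h1 : plex x y) (h2 : plex y z) : plex x z := by
  rcases h1 with h1 | ⟨h1, hne1⟩
  · rcases h2 with h2 | ⟨h2, hne2⟩
    · exact Or.inl (ldiff_trans h1 h2)
    · obtain ⟨y₂, rfl⟩ := h2
      rcases ldiff_stable z h1 with hp | hall
      · refine Or.inr ⟨hp, fun hzx => ?_⟩
        subst hzx
        exact ldiff_irrefl' z y₂ h1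
      · have := hall []
        rw [List.append_nil] at this
        exact Or.inl this
  · rcases h2 with h2 | ⟨h2, hne2⟩
    · obtain ⟨x₂, rfl⟩ := h1
      have := ldiff_append h2 x₂ []
      rw [List.append_nil] at this
      exact Or.inl this
    · refine Or.inr ⟨h2.trans h1, fun hzx => ?_⟩
      subst hzx
      exact hne2 (h2.eq_of_length (le_antisymm h2.length_le h1.length_le))

theorem plex_cons {a b : X} {u v : List X} :
    plex (a :: u) (b :: v) ↔ a < b ∨ (a = b ∧ plex u v) := by
  rw [plex_iff, plex_iff, ldiff_cons, List.cons_prefix_cons]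
  constructor
  · rintro ((h | ⟨rfl, h⟩) | ⟨⟨rfl, h⟩, hne⟩)
    · exact Or.inl h
    · exact Or.inr ⟨rfl, Or.inl h⟩
    · exact Or.inr ⟨rfl, Or.inr ⟨h, fun hvu => hne (by rw [hvu])⟩⟩
  · rintro (h | ⟨rfl, (h | ⟨h, hne⟩)⟩)
    · exact Or.inl (Or.inl h)
    · exact Or.inl (Or.inr ⟨rfl, h⟩)
    · exact Or.inr ⟨⟨rfl, h⟩, fun hvu => hne (by injection hvu)⟩

theorem plex_total : ∀ u v : List X, plex u v ∨ u = v ∨ plex v u := by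
  intro u
  induction u with
  | nil =>
    intro v
    cases v with
    | nil => exact Or.inr (Or.inl rfl)
    | cons b v => exact Or.inr (Or.inr (plex_nil_right (by simp)))
  | cons a u ih =>
    intro v
    cases v with
    | nil => exact Or.inl (plex_nil_right (by simp))
    | cons b v =>
      rcases lt_trichotomy a b with h | rfl | h
      · exact Or.inl (plex_cons.2 (Or.inl h))
      · rcases ih v with h | rfl | h
        · exact Or.inl (plex_cons.2 (Or.inr ⟨rfl, h⟩))
        · exact Or.inr (Or.inl rfl)
        · exact Or.inr (Or.inr (plex_cons.2 (Or.inr ⟨rfl, h⟩)))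
      · exact Or.inr (Or.inr (plex_cons.2 (Or.inl h)))

theorem plex_append_left : ∀ (c : List X) {u v : List X}, plex (c ++ u) (c ++ v) ↔ plex u v := by
  intro c
  induction c with
  | nil => simp
  | cons a c ih => intro u v; simpa [plex_cons] using ih

end Plex

section Lyndon
set_option linter.unusedSectionVars false
variable {X : Type*} [LinearOrder X]

/-- helper: proper suffix decomposition from `plex` goals on equal-length words -/
theorem ldiff_of_plex_eqlen {x u : List X} (h : plex x u) (hl : x.length = u.length) :
    LDiff x u := by
  rcases h with h | ⟨h, hne⟩
  · exact h
  · exact absurd (h.eq_of_length hl.symm) hne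

/-- T1: a Lyndon word letter-dominates each of its proper nonempty suffixes. -/
theorem lyndon_ldiff {u t s : List X} (hu : IsLyndon u) (heq : u = t ++ s)
    (ht : t ≠ []) (hs : s ≠ []) : LDiff s u := by
  have hlen : s.length < u.length := by
    rw [heq, List.length_append]
    have := List.length_pos_iff.2 ht
    omega
  rcases plex_total s u with h | heqs | h
  · rcases h with h | ⟨h, hne⟩
    · exact h
    · exact absurd h.length_le (not_le.2 hlen)
  · rw [heqs] at hlen; exact absurd hlen (lt_irrefl _)
  · -- plex u s : derive contradictions
    rcases h with h | ⟨h, hne⟩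
    · -- LDiff u s
      have h2 : plex (s ++ t) (t ++ s) := hu.2 t s ht hs heq
      rw [← heq] at h2
      have hl2 : (s ++ t).length = u.length := by
        rw [heq]; simp [List.length_append]; omega
      have h3 : LDiff (s ++ t) u := ldiff_of_plex_eqlen h2 hl2
      have h4 : LDiff u (s ++ t) := by
        have := ldiff_append h [] t
        simpa using this
      exact absurd (ldiff_asymm h3 h4) not_false
    · -- s proper prefix and suffix of u
      obtain ⟨m, hm⟩ := h
      have hmne : m ≠ [] := by
        rintro rfl
        rw [List.append_nil] at hm
        rw [hm] at hlen
        exact absurd hlen (lt_irrefl _)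
      have h3 : plex (m ++ s) (s ++ m) := hu.2 s m hs hmne hm.symm
      rw [hm] at h3
      have hl3 : (m ++ s).length = u.length := by
        rw [← hm]; simp [List.length_append]; omega
      have h3' : LDiff (m ++ s) u := ldiff_of_plex_eqlen h3 hl3
      have h4 : plex (s ++ t) (t ++ s) := hu.2 t s ht hs heq
      rw [← heq] at h4
      have hl4 : (s ++ t).length = u.length := by
        rw [heq]; simp [List.length_append]; omega
      have h4' : LDiff (s ++ t) u := ldiff_of_plex_eqlen h4 hl4
      rw [← hm, ldiff_append_left_iff] at h4'
      -- h4' : LDiff t m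
      rw [heq] at h3'
      have hlm : m.length = t.length := by
        have e1 : u.length = s.length + m.length := by rw [← hm]; simp
        have e2 : u.length = t.length + s.length := by rw [heq]; simp
        omega
      rcases ldiff_eqlen hlm h3' with h5 | ⟨hmt, h5⟩
      · exact absurd (ldiff_asymm h5 h4') not_false
      · rw [hmt] at h4'
        exact absurd (ldiff_irrefl t h4') not_false

/-- T2: converse of T1. -/
theorem lyndon_of_ldiff {u : List X} (hu : u ≠ [])
    (h : ∀ t s, t ≠ [] → s ≠ [] → u = t ++ s → LDiff s u) : IsLyndon u := by
  refine ⟨hu, fun v w hv hw heq => ?_⟩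
  have h1 : LDiff w u := h v w hv hw heq
  rw [heq] at h1
  have := ldiff_append h1 v []
  rw [List.append_nil] at this
  exact Or.inl this

theorem lyndon_ldiff_suffix {u s : List X} (hu : IsLyndon u) (hs : s <:+ u)
    (hne : s ≠ []) (hpr : s ≠ u) : LDiff s u := by
  obtain ⟨t, ht⟩ := hs
  refine lyndon_ldiff hu ht.symm ?_ hne
  rintro rfl
  exact hpr (by simpa using ht)

theorem suffix_tail {u s : List X} (h : s <:+ u) (hl : s.length < u.length) :
    s <:+ u.tail := by
  obtain ⟨c, hc⟩ := h
  cases c with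
  | nil =>
    simp only [List.nil_append] at hc
    rw [hc] at hl
    exact absurd hl (lt_irrefl _)
  | cons a c' => exact ⟨c', by rw [← hc]; rfl⟩

theorem suffix_of_suffix_length_le {u s t : List X} (hs : s <:+ u) (ht : t <:+ u)
    (hl : s.length ≤ t.length) : s <:+ t := by
  obtain ⟨c, hc⟩ := hs
  obtain ⟨d, hd⟩ := ht
  have h : d ++ t = c ++ s := by rw [hc, hd]
  rcases List.append_eq_append_iff.1 h with ⟨a', ha1, ha2⟩ | ⟨c', hc1, hc2⟩
  · exact ⟨a', ha2.symm⟩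
  · have hlen := congrArg List.length hc2
    simp only [List.length_append] at hlen
    have : c'.length = 0 := by omega
    rw [List.length_eq_zero_iff.1 this] at hc2
    simp only [List.nil_append] at hc2
    exact hc2 ▸ List.suffix_refl t

theorem eq_of_suffix_of_length_eq {u s t : List X} (hs : s <:+ u) (ht : t <:+ u)
    (hl : s.length = t.length) : s = t := by
  obtain ⟨c, hc⟩ := suffix_of_suffix_length_le hs ht hl.le
  have hlen := congrArg List.length hc
  simp only [List.length_append] at hlen
  have : c.length = 0 := by omega
  rw [List.length_eq_zero_iff.1 this] at hc
  simpa using hc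

omit [LinearOrder X] in
theorem prefix_append_cases {s a b : List X} (h : s <+: a ++ b) :
    s <+: a ∨ ∃ d, s = a ++ d ∧ d <+: b := by
  obtain ⟨r, hr⟩ := h
  rcases List.append_eq_append_iff.1 hr with ⟨a', ha1, ha2⟩ | ⟨c', hc1, hc2⟩
  · exact Or.inl ⟨a', ha1.symm⟩
  · exact Or.inr ⟨c', hc1, ⟨r, hc2.symm⟩⟩

end Lyndon

section MaxSuf
set_option linter.unusedSectionVars false
variable {X : Type*} [LinearOrder X]

/-- pick the plex-larger of two words -/
noncomputable def pmax (a b : List X) : List X :=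
  @ite _ (plex a b) (Classical.propDecidable _) b a

theorem pmax_left (a b : List X) : a = pmax a b ∨ plex a (pmax a b) := by
  unfold pmax
  split
  · next h => exact Or.inr h
  · exact Or.inl rfl

theorem pmax_right (a b : List X) : b = pmax a b ∨ plex b (pmax a b) := by
  unfold pmax
  split
  · exact Or.inl rfl
  · next h =>
    rcases plex_total a b with h' | rfl | h'
    · exact absurd h' h
    · exact Or.inl rfl
    · exact Or.inr h'

theorem pmax_eq_or (a b : List X) : pmax a b = a ∨ pmax a b = b := by
  unfold pmax; split
  · exact Or.inr rfl
  · exact Or.inl rfl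

/-- the plex-maximal nonempty suffix of a nonempty word -/
noncomputable def maxNSuf : List X → List X
  | [] => []
  | [x] => [x]
  | x :: y :: t => pmax (x :: y :: t) (maxNSuf (y :: t))

theorem maxNSuf_cons_cons (x y : X) (t : List X) :
    maxNSuf (x :: y :: t) = pmax (x :: y :: t) (maxNSuf (y :: t)) := rfl

theorem maxNSuf_suffix : ∀ t : List X, t ≠ [] → maxNSuf t <:+ t ∧ maxNSuf t ≠ [] := by
  intro t
  induction t with
  | nil => intro h; exact absurd rfl h
  | cons x tl ih =>
    intro _
    cases tl with
    | nil => exact ⟨List.suffix_refl _, by simp [maxNSuf]⟩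
    | cons y t' =>
      have ihs := ih (by simp)
      rw [maxNSuf_cons_cons]
      rcases pmax_eq_or (x :: y :: t') (maxNSuf (y :: t')) with h | h <;> rw [h]
      · exact ⟨List.suffix_refl _, by simp⟩
      · exact ⟨ihs.1.trans (List.suffix_cons x _), ihs.2⟩

theorem maxNSuf_max : ∀ (t s : List X), s <:+ t → s ≠ [] →
    s = maxNSuf t ∨ plex s (maxNSuf t) := by
  intro t
  induction t with
  | nil =>
    intro s hs hne
    exact absurd (List.suffix_nil.1 hs) hne
  | cons x tl ih =>
    intro s hs hne
    cases tl with
    | nil =>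
      rcases List.suffix_cons_iff.1 hs with h | h
      · exact Or.inl (by simpa [maxNSuf] using h)
      · exact absurd (List.suffix_nil.1 h) hne
    | cons y t' =>
      rw [maxNSuf_cons_cons]
      rcases List.suffix_cons_iff.1 hs with rfl | h
      · exact pmax_left (x :: y :: t') (maxNSuf (y :: t'))
      · rcases ih s h hne with h' | h'
        · rw [h']
          exact pmax_right (x :: y :: t') (maxNSuf (y :: t'))
        · rcases pmax_right (x :: y :: t') (maxNSuf (y :: t')) with h'' | h''
          · rw [← h'']; exact Or.inr h'
          · exact Or.inr (plex_trans h' h'')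

/-- α : the plex-maximal nonempty suffix is a Lyndon word. -/
theorem maxNSuf_lyndon (t : List X) (ht : t ≠ []) : IsLyndon (maxNSuf t) := by
  obtain ⟨hsuf, hne⟩ := maxNSuf_suffix t ht
  refine lyndon_of_ldiff hne ?_
  intro d e hd he heq
  have hesuf : e <:+ t := (heq ▸ List.suffix_append d e).trans hsuf
  have hlen : e.length < (maxNSuf t).length := by
    have := congrArg List.length heq
    simp only [List.length_append] at this
    have := List.length_pos_iff.2 hd
    omega
  rcases maxNSuf_max t e hesuf he with h | h
  · rw [h] at hlen; exact absurd hlen (lt_irrefl _)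
  · rcases h with h | ⟨h, hne'⟩
    · exact h
    · exact absurd h.length_le (not_le.2 hlen)

/-- (c): in a Lyndon word `v ++ w`, the suffix is plex-smaller than the prefix. -/
theorem plex_of_split {v w : List X} (hu : IsLyndon (v ++ w)) (hv : v ≠ []) (hw : w ≠ []) :
    plex w v := by
  have h1 : LDiff w (v ++ w) := lyndon_ldiff hu rfl hv hw
  rcases ldiff_stable v h1 with hp | hall
  · refine Or.inr ⟨hp, fun hvw => ?_⟩
    rw [hvw] at h1
    exact ldiff_irrefl' w w h1
  · have := hall []
    rw [List.append_nil] at this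
    exact Or.inl this

/-- core of the boundary case : `plex (y ++ x) (x ++ y)` for Lyndon `y` with `plex y x`. -/
theorem plex_exchange {x y : List X} (hx : x ≠ []) (hy : IsLyndon y) (h : plex y x) :
    plex (y ++ x) (x ++ y) := by
  rcases h with h | ⟨h, hne⟩
  · exact Or.inl (ldiff_append h x y)
  · obtain ⟨z, hz⟩ := h
    have hzne : z ≠ [] := by
      rintro rfl
      exact hne (by simpa using hz)
    have h1 : LDiff z y := lyndon_ldiff hy hz.symm hx hzne
    rw [← hz] at h1 ⊢
    have : plex (x ++ (z ++ x)) (x ++ (x ++ z)) := by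
      rw [plex_append_left]
      have := ldiff_append h1 x []
      rw [List.append_nil] at this
      exact Or.inl this
    simpa [List.append_assoc] using this

/-- N1 -/
theorem plex_self_append {x y : List X} (hx : x ≠ []) (hy : IsLyndon y) (h : plex y x) :
    plex y (x ++ y) := by
  rcases h with h | ⟨h, hne⟩
  · have := ldiff_append h [] y
    exact Or.inl (by rw [List.append_nil] at this; exact this)
  · obtain ⟨z, hz⟩ := h
    have hzne : z ≠ [] := by
      rintro rfl
      exact hne (by simpa using hz)
    have h1 : LDiff z y := lyndon_ldiff hy hz.symm hx hzne
    rw [← hz] at h1 ⊢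
    exact (plex_append_left x).2 (Or.inl h1)

/-- L3 : concatenation of Lyndon words. -/
theorem lyndon_append {x y : List X} (hx : IsLyndon x) (hy : IsLyndon y)
    (h : plex y x) : IsLyndon (x ++ y) := by
  refine ⟨by simp [hx.1], ?_⟩
  intro v w hv hw heq
  rcases List.append_eq_append_iff.1 heq with ⟨a', ha1, ha2⟩ | ⟨c', hc1, hc2⟩
  · -- v = x ++ a', y = a' ++ w  (case iii)
    by_cases ha : a' = []
    · subst ha
      simp only [List.append_nil] at ha1
      simp only [List.nil_append] at ha2
      rw [ha1, ← ha2]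
      exact plex_exchange hx.1 hy h
    · have hwy : LDiff w y := lyndon_ldiff hy ha2 ha hw
      have h5 : LDiff (w ++ v) y := by
        have := ldiff_append hwy v []
        simpa using this
      have h6 : plex y (x ++ y) := plex_self_append hx.1 hy h
      rw [heq] at h6
      exact plex_trans (Or.inl h5) h6
  · -- x = v ++ c', w = c' ++ y  (case ii)
    by_cases hc : c' = []
    · subst hc
      simp only [List.append_nil] at hc1
      simp only [List.nil_append] at hc2
      rw [← hc1, hc2]
      exact plex_exchange hx.1 hy h
    · have hcx : LDiff c' x := lyndon_ldiff hx hc1 hv hc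
      have h7 : LDiff (c' ++ (y ++ v)) (x ++ y) := by
        have := ldiff_append hcx (y ++ v) y
        simpa [List.append_assoc] using this
      rw [heq, hc2] at h7
      rw [hc2, List.append_assoc]
      exact Or.inl h7

end MaxSuf

section NAWdefs
variable {X : Type*} [LinearOrder X]

omit [LinearOrder X] in
theorem flatten_ne_nil (t : NAW X) : t.flatten ≠ [] := by
  induction t with
  | leaf x => simp [NAW.flatten]
  | node l r ihl ihr =>
    simp only [NAW.flatten]
    intro h
    exact ihl (List.append_eq_nil_iff.1 h).1

theorem maxNSuf_eq_self {w : List X} (hw : IsLyndon w) : maxNSuf w = w := by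
  rcases maxNSuf_max w w (List.suffix_refl w) hw.1 with h | h
  · exact h.symm
  · obtain ⟨hsuf, hne⟩ := maxNSuf_suffix w hw.1
    by_cases he : maxNSuf w = w
    · exact he
    · have := lyndon_ldiff_suffix hw hsuf hne he
      exact absurd (plex_asymm h (Or.inl this)) not_false

/-- word-level core of Θ3 -/
theorem right_eq_maxNSuf {v w : List X} (hLv : IsLyndon v) (hLw : IsLyndon w)
    (hsmall : ∀ z, z <:+ v → z ≠ v → z ≠ [] → plex z w ∨ z = w) :
    w = maxNSuf (v ++ w).tail := by
  have hvne := hLv.1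
  have hwne := hLw.1
  have hvpos := List.length_pos_iff.2 hvne
  have hwpos := List.length_pos_iff.2 hwne
  have hulen : (v ++ w).length = v.length + w.length := by simp
  have hTne : (v ++ w).tail ≠ [] := by
    intro h
    have := congrArg List.length h
    rw [List.length_tail] at this
    simp at this
    omega
  obtain ⟨hTsuf, -⟩ := maxNSuf_suffix (v ++ w).tail hTne
  have hwT : w <:+ (v ++ w).tail :=
    suffix_tail (List.suffix_append v w) (by omega)
  rcases maxNSuf_max _ w hwT hwne with heq | hlt
  · exact heq
  · exfalso
    set m := maxNSuf (v ++ w).tail with hm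
    have hmne : m ≠ [] := (maxNSuf_suffix _ hTne).2
    have hm_u : m <:+ v ++ w := hTsuf.trans (List.tail_suffix _)
    have hmlen : m.length < (v ++ w).length := by
      have h1 := hTsuf.length_le
      rw [List.length_tail] at h1
      omega
    rcases le_or_gt m.length w.length with hle | hgt
    · have hmw : m <:+ w := suffix_of_suffix_length_le hm_u (List.suffix_append v w) hle
      by_cases he : m = w
      · rw [he] at hlt; exact plex_irrefl w hlt
      · exact plex_asymm hlt (Or.inl (lyndon_ldiff_suffix hLw hmw hmne he))
    · have hwsub : w <:+ m :=
        suffix_of_suffix_length_le (List.suffix_append v w) hm_u hgt.le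
      obtain ⟨z, hz⟩ := hwsub
      have hzne : z ≠ [] := by
        rintro rfl
        rw [List.nil_append] at hz
        rw [← hz] at hgt
        exact absurd hgt (lt_irrefl _)
      obtain ⟨c₂, hc₂⟩ := hm_u
      have hvz : v = c₂ ++ z := by
        have h2 : (c₂ ++ z) ++ w = v ++ w := by rw [List.append_assoc, hz, hc₂]
        exact (List.append_cancel_right h2).symm
      have hzv : z ≠ v := by
        intro hzv
        rw [hzv] at hz
        rw [← hz] at hmlen
        exact absurd hmlen (lt_irrefl _)
      have hL : IsLyndon m := maxNSuf_lyndon _ hTne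
      have hdw : LDiff w m := lyndon_ldiff hL hz.symm hzne hwne
      rcases hsmall z ⟨c₂, hvz.symm⟩ hzv hzne with hzw | heq'
      · rcases hzw with hl | ⟨hp, hne⟩
        · have h3 := ldiff_append hl w ([] : List X)
          rw [List.append_nil] at h3
          rw [← hz] at hdw
          exact ldiff_asymm hdw h3
        · obtain ⟨z₂, hz₂⟩ := hp
          rw [← hz, ← hz₂, List.append_assoc] at hdw
          exact ldiff_irrefl' w _ hdw
      · rw [← hz, heq'] at hdw
        exact ldiff_irrefl' w w hdw

/-- Θ3 : the right factor of a standard node is the plex-maximal proper suffix. -/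
theorem sl_right (l : NAW X) : ∀ r : NAW X, IsSL (NAW.node l r) →
    r.flatten = maxNSuf ((NAW.node l r).flatten).tail := by
  induction l with
  | leaf a =>
    intro r h
    obtain ⟨-, -, hLv, hLw, -, -⟩ := h
    show r.flatten = maxNSuf (((NAW.leaf a).flatten ++ r.flatten)).tail
    apply right_eq_maxNSuf hLv hLw
    intro z hzsuf hzv hzne
    rcases List.suffix_cons_iff.1 hzsuf with h1 | h1
    · exact absurd h1 hzv
    · exact absurd (List.suffix_nil.1 h1) hzne
  | node l1 l2 ih1 _ =>
    intro r h
    obtain ⟨hSLl, hSLr, hLv, hLw, hwv, hcond⟩ := h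
    have hv2 := ih1 l2 hSLl
    show r.flatten = maxNSuf (((NAW.node l1 l2).flatten ++ r.flatten)).tail
    apply right_eq_maxNSuf hLv hLw
    intro z hzsuf hzv hzne
    have hzlen : z.length < (NAW.node l1 l2).flatten.length :=
      lt_of_le_of_ne hzsuf.length_le (fun h' => hzv (eq_of_suffix_of_length_eq hzsuf (List.suffix_refl _) h'))
    have hztail : z <:+ (NAW.node l1 l2).flatten.tail := suffix_tail hzsuf hzlen
    have h1 : z = l2.flatten ∨ plex z l2.flatten := by
      rcases maxNSuf_max _ z hztail hzne with h1 | h1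
      · rw [← hv2] at h1; exact Or.inl h1
      · rw [← hv2] at h1; exact Or.inr h1
    have h2 : r.flatten = l2.flatten ∨ plex l2.flatten r.flatten := by
      rcases plex_total r.flatten l2.flatten with h2 | h2 | h2
      · exact absurd h2 hcond
      · exact Or.inl h2
      · exact Or.inr h2
    rcases h1 with rfl | h1
    · rcases h2 with h2 | h2
      · exact Or.inr h2.symm
      · exact Or.inl h2
    · rcases h2 with h2 | h2
      · exact Or.inl (h2 ▸ h1)
      · exact Or.inl (plex_trans h1 h2)

end NAWdefs

section LeftFactor
set_option linter.unusedSectionVars false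
variable {X : Type*} [LinearOrder X]

theorem lyndon_left {u v w : List X} (hu : IsLyndon u) (heq : u = v ++ w)
    (hv : v ≠ []) (hw : w ≠ []) (hLw : IsLyndon w)
    (hmax : ∀ s, s <:+ u → s ≠ u → s ≠ [] → s = w ∨ plex s w) : IsLyndon v := by
  apply lyndon_of_ldiff hv
  intro t s ht hs hveq
  have hulen : u.length = v.length + w.length := by rw [heq]; simp
  have hvlen : v.length = t.length + s.length := by rw [hveq]; simp
  have htpos := List.length_pos_iff.2 ht
  have hspos := List.length_pos_iff.2 hs
  have hwpos := List.length_pos_iff.2 hw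
  have hswsuf : s ++ w <:+ u := ⟨t, by rw [heq, hveq, List.append_assoc]⟩
  have h1 : LDiff (s ++ w) u :=
    lyndon_ldiff hu (by rw [heq, hveq, List.append_assoc]) ht (by simp [hs])
  rw [heq] at h1
  have hslen : s.length ≤ v.length := by omega
  rcases ldiff_prefix_cases hslen h1 with hgood | hpre
  · exact hgood
  · exfalso
    obtain ⟨m, hm⟩ := hpre
    have hmne : m ≠ [] := by
      rintro rfl
      rw [List.append_nil] at hm
      rw [hm] at hvlen
      omega
    have hmpos := List.length_pos_iff.2 hmne
    have hu2 : u = s ++ (m ++ w) := by rw [heq, ← hm, List.append_assoc]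
    -- the key fact, used twice below
    have key : LDiff w (s ++ w) := by
      have hwu : LDiff w u := lyndon_ldiff_suffix hu ⟨v, heq.symm⟩ hw
        (by intro h'; have := congrArg List.length h'; omega)
      rw [hu2] at hwu
      rcases ldiff_stable s hwu with hp | hall
      · obtain ⟨w₂, hw₂⟩ := hp
        by_cases hw₂ne : w₂ = []
        · rw [hw₂ne, List.append_nil] at hw₂
          rw [← hw₂] at hwu
          exact absurd hwu (ldiff_irrefl' s _)
        · nth_rewrite 1 [← hw₂]
          exact (ldiff_append_left_iff s w₂ w).2 (lyndon_ldiff hLw hw₂.symm hs hw₂ne)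
      · exact hall w
    -- s ++ w is Lyndon
    have hS : IsLyndon (s ++ w) := by
      apply lyndon_of_ldiff (by simp [hs])
      intro d e hd he hde
      have hdpos := List.length_pos_iff.2 hd
      rcases List.append_eq_append_iff.1 hde with ⟨a', hd1, hw1⟩ | ⟨c', hs1, he1⟩
      · -- d = s ++ a', w = a' ++ e
        by_cases ha : a' = []
        · rw [ha, List.nil_append] at hw1
          rw [← hw1]
          exact key
        · have hesufw : e <:+ w := ⟨a', hw1.symm⟩
          have helt : e.length < w.length := by
            have h2 := congrArg List.length hw1
            simp only [List.length_append] at h2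
            have := List.length_pos_iff.2 ha
            omega
          have heu : e <:+ u := List.IsSuffix.trans hesufw ⟨v, heq.symm⟩
          have heL : LDiff e u := lyndon_ldiff_suffix hu heu he
            (by intro h'; have := congrArg List.length h'; omega)
          rw [hu2] at heL
          rcases ldiff_stable s heL with hp | hall
          · obtain ⟨e', he'⟩ := hp
            by_cases he'ne : e' = []
            · rw [he'ne, List.append_nil] at he'
              rw [← he'] at heL
              exact absurd heL (ldiff_irrefl' s _)
            · have he'suf : e' <:+ w := List.IsSuffix.trans ⟨s, he'⟩ hesufw
              have he'lt : LDiff e' w := lyndon_ldiff_suffix hLw he'suf he'ne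
                (by intro h'
                    have h3 := congrArg List.length he'
                    have h4 := congrArg List.length h'
                    simp only [List.length_append] at h3
                    omega)
              rw [← he']
              exact (ldiff_append_left_iff s e' w).2 he'lt
          · exact hall w
      · -- s = d ++ c', e = c' ++ w
        by_cases hc : c' = []
        · rw [hc, List.nil_append] at he1
          rw [he1]
          exact key
        · have hc'suf_s : c' <:+ s := ⟨d, hs1.symm⟩
          have hc'lt : c'.length < s.length := by
            have h2 := congrArg List.length hs1
            simp only [List.length_append] at h2
            omega
          have hssufv : s <:+ v := ⟨t, hveq.symm⟩
          have hc'v : c' <:+ v := List.IsSuffix.trans hc'suf_s hssufv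
          have heu : e <:+ u := by
            obtain ⟨g, hg⟩ := hc'v
            rw [he1, heq, ← hg, List.append_assoc]
            exact ⟨g, rfl⟩
          have heL : LDiff e u := lyndon_ldiff_suffix hu heu he
            (by intro h'
                have h3 := congrArg List.length he1
                have h4 := congrArg List.length h'
                simp only [List.length_append] at h3
                omega)
          rw [hu2] at heL
          rcases ldiff_stable s heL with hp | hall
          · rw [he1] at hp
            rcases prefix_append_cases hp with hp' | ⟨d₂, hd₂, hd₂w⟩
            · exact absurd hp'.length_le (not_le.2 hc'lt)
            · have hd₂ne : d₂ ≠ [] := by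
                rintro rfl
                rw [List.append_nil] at hd₂
                rw [hd₂] at hc'lt
                exact absurd hc'lt (lt_irrefl _)
              obtain ⟨w₃, hw₃⟩ := hd₂w
              by_cases hw₃ne : w₃ = []
              · rw [hw₃ne, List.append_nil] at hw₃
                have hes : e = s := by rw [he1, hd₂, hw₃]
                rw [hes] at heL
                exact absurd heL (ldiff_irrefl' s _)
              · have hgoal : LDiff w₃ w := lyndon_ldiff hLw hw₃.symm hd₂ne hw₃ne
                have hfin : LDiff (c' ++ (d₂ ++ w₃)) ((c' ++ d₂) ++ w) := by
                  rw [← List.append_assoc]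
                  exact (ldiff_append_left_iff (c' ++ d₂) w₃ w).2 hgoal
                rw [hw₃] at hfin
                rw [he1, hd₂]
                exact hfin
          · exact hall w
    -- contradiction with maximality of w
    have hSne_u : s ++ w ≠ u := by
      intro h'
      have := congrArg List.length h'
      simp only [List.length_append] at this
      omega
    rcases hmax (s ++ w) hswsuf hSne_u (by simp [hs]) with h' | h'
    · have := congrArg List.length h'
      simp only [List.length_append] at this
      omega
    · exact plex_asymm h' (Or.inl (lyndon_ldiff hS rfl hs hw))

end LeftFactor

section Final
set_option linter.unusedSectionVars false
variable {X : Type*} [LinearOrder X]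

theorem sl_exists : ∀ n (u : List X), u.length ≤ n → IsLyndon u →
    ∃ t : NAW X, t.flatten = u ∧ IsSL t := by
  intro n
  induction n with
  | zero =>
    intro u hl hu
    exact absurd (List.length_eq_zero_iff.1 (Nat.le_antisymm hl (Nat.zero_le _))) hu.1
  | succ n ih =>
    intro u hl hu
    cases u with
    | nil => exact absurd rfl hu.1
    | cons x tl =>
      by_cases htl : tl = []
      · subst htl
        exact ⟨NAW.leaf x, rfl, trivial⟩
      · obtain ⟨hwsuf, hwne⟩ := maxNSuf_suffix tl htl
        have hLw : IsLyndon (maxNSuf tl) := maxNSuf_lyndon tl htl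
        have hmax0 : ∀ s, s <:+ (x :: tl) → s ≠ (x :: tl) → s ≠ [] →
            s = maxNSuf tl ∨ plex s (maxNSuf tl) := by
          intro s hsuf hneu hne
          have hlt : s.length < (x :: tl).length :=
            lt_of_le_of_ne hsuf.length_le
              (fun h => hneu (eq_of_suffix_of_length_eq hsuf (List.suffix_refl _) h))
          exact maxNSuf_max tl s (suffix_tail hsuf hlt) hne
        set w := maxNSuf tl with hwdef
        obtain ⟨c, hc⟩ := hwsuf
        have heq : x :: tl = (x :: c) ++ w := by rw [← hc]; rfl
        have hmax : ∀ s, s <:+ (x :: tl) → s ≠ (x :: tl) → s ≠ [] →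
            s = w ∨ plex s w := hmax0
        have hLv : IsLyndon (x :: c) := lyndon_left hu heq (by simp) hwne hLw hmax
        have hlen0 : tl.length = c.length + w.length := by
          rw [← hc]; simp
        have hwpos := List.length_pos_iff.2 hwne
        have hvlen : (x :: c).length ≤ n := by
          simp only [List.length_cons] at hl ⊢
          omega
        have hwlen : w.length ≤ n := by
          simp only [List.length_cons] at hl
          omega
        obtain ⟨tv, htv1, htv2⟩ := ih (x :: c) hvlen hLv
        obtain ⟨tw, htw1, htw2⟩ := ih w hwlen hLw
        refine ⟨NAW.node tv tw, ?_, ?_⟩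
        · show tv.flatten ++ tw.flatten = x :: tl
          rw [htv1, htw1, ← heq]
        · refine ⟨htv2, htw2, ?_, ?_, ?_, ?_⟩
          · rw [htv1]; exact hLv
          · rw [htw1]; exact hLw
          · rw [htv1, htw1]
            exact plex_of_split (heq ▸ hu) (by simp) hwne
          · cases tv with
            | leaf _ => trivial
            | node t1 t2 =>
              show ¬ plex tw.flatten t2.flatten
              intro hcon
              have hv2 := sl_right t1 t2 htv2
              rw [htv1] at hv2
              have hcne : c ≠ [] := by
                intro hcnil
                have h1 := flatten_ne_nil t1
                have h2 := flatten_ne_nil t2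
                have h3 := congrArg List.length htv1
                simp only [NAW.flatten, List.length_append, List.length_cons, hcnil,
                  List.length_nil] at h3
                have := List.length_pos_iff.2 h1
                have := List.length_pos_iff.2 h2
                omega
              have hv2' : t2.flatten = maxNSuf c := hv2
              obtain ⟨hv2suf, hv2ne⟩ := maxNSuf_suffix c hcne
              have hLv2 : IsLyndon t2.flatten := by
                rw [hv2']; exact maxNSuf_lyndon c hcne
              rw [htw1] at hcon
              have hK : IsLyndon (t2.flatten ++ w) := lyndon_append hLv2 hLw hcon
              have ht2le : t2.flatten.length ≤ c.length := by
                rw [hv2']; exact hv2suf.length_le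
              have ht2pos : 0 < t2.flatten.length :=
                List.length_pos_iff.2 (hv2' ▸ hv2ne)
              have hsufK : t2.flatten ++ w <:+ x :: tl := by
                rw [hv2']
                obtain ⟨g, hg⟩ := hv2suf
                refine ⟨x :: g, ?_⟩
                have hassoc : (x :: g) ++ (maxNSuf c ++ w) = x :: ((g ++ maxNSuf c) ++ w) := by
                  simp [List.append_assoc]
                rw [hassoc, hg, hc]
              have hKne : t2.flatten ++ w ≠ x :: tl := by
                intro h'
                have h3 := congrArg List.length h'
                simp only [List.length_append, List.length_cons] at h3
                omega
              rcases hmax _ hsufK hKne (by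
                intro h'
                have := congrArg List.length h'
                simp only [List.length_append, List.length_nil] at this
                omega) with h' | h'
              · have := congrArg List.length h'
                simp only [List.length_append] at this
                omega
              · exact plex_asymm h'
                  (Or.inl (lyndon_ldiff hK rfl (hv2' ▸ hv2ne) hwne))

theorem sl_unique (t : NAW X) : ∀ t' : NAW X, IsSL t → IsSL t' →
    t.flatten = t'.flatten → t = t' := by
  induction t with
  | leaf a =>
    intro t' h h' hfl
    cases t' with
    | leaf b =>
      simp only [NAW.flatten, List.cons.injEq] at hfl
      rw [hfl.1]
    | node l' r' =>
      exfalso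
      have h1 := List.length_pos_iff.2 (flatten_ne_nil l')
      have h2 := List.length_pos_iff.2 (flatten_ne_nil r')
      have h3 := congrArg List.length hfl
      simp only [NAW.flatten, List.length_append, List.length_cons, List.length_nil] at h3
      omega
  | node l r ihl ihr =>
    intro t' h h' hfl
    cases t' with
    | leaf b =>
      exfalso
      have h1 := List.length_pos_iff.2 (flatten_ne_nil l)
      have h2 := List.length_pos_iff.2 (flatten_ne_nil r)
      have h3 := congrArg List.length hfl
      simp only [NAW.flatten, List.length_append, List.length_cons, List.length_nil] at h3
      omega
    | node l' r' =>
      have e1 := sl_right l r h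
      have e2 := sl_right l' r' h'
      have hflat : (NAW.node l r).flatten = (NAW.node l' r').flatten := hfl
      rw [hflat] at e1
      have hr : r.flatten = r'.flatten := e1.trans e2.symm
      have hl : l.flatten = l'.flatten := by
        have h4 : l.flatten ++ r.flatten = l'.flatten ++ r'.flatten := hfl
        rw [hr] at h4
        exact List.append_cancel_right h4
      obtain ⟨hSLl, hSLr, -, -, -, -⟩ := h
      obtain ⟨hSLl', hSLr', -, -, -, -⟩ := h'
      rw [ihl l' hSLl hSLl' hl, ihr r' hSLr hSLr' hr]

end Final

/-- The standard bracketing of a Lyndon word is unique: for each Lyndon word `u` there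
is exactly one standard nonassociative word with underlying associative word `u`. -/
theorem standard_bracketing_unique {X : Type*} [LinearOrder X] (u : List X)
    (hu : IsLyndon u) :
    ∃! t : NAW X, t.flatten = u ∧ IsSL t := by
  obtain ⟨t, ht1, ht2⟩ := sl_exists u.length u le_rfl hu
  exact ⟨t, ⟨ht1, ht2⟩, fun t' ⟨ht1', ht2'⟩ => sl_unique t' t ht2' ht2 (ht1'.trans ht1.symm)⟩
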